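/- Let (s, Δ) be a solution of the plane Hamilton system on [0, ξ̄]. Then for every ξ ∈ [0, ξ̄] one has the energy identity (s(ξ) − 1)²/(2 s(ξ)) + U(Δ(ξ); Z) = ∫₀^ξ v(η) s'(η)/(2 s(η)²) dη. -/

import Mathlib

open MeasureTheory intervalIntegral Real Set

/-- Energy identity for the plane Hamilton system:
`(s(ξ) − 1)²/(2 s(ξ)) + U(Δ(ξ); Z) = ∫₀^ξ v(η) s'(η)/(2 s(η)²) dη`,
where `U(Δ; Z) = K ∫₀^Δ (Δ − ζ) ñ₀(Z + ζ) dζ`. -/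
theorem energy_identity
    (K Z ξbar : ℝ) (hK : 0 < K) (hZ : 0 ≤ Z) (hξbar : 0 ≤ ξbar)
    (v n0 : ℝ → ℝ) (hv_cont : Continuous v) (hv_nonneg : ∀ x, 0 ≤ v x)
    (hn0_cont : Continuous n0) (hn0_nonneg : ∀ x, 0 ≤ n0 x)
    (s Δ : ℝ → ℝ)
    (hs_pos : ∀ η ∈ Set.Icc (0:ℝ) ξbar, 0 < s η)
    (hΔ' : ∀ η ∈ Set.Icc (0:ℝ) ξbar,
      HasDerivAt Δ ((1 + v η) / (2 * (s η)^2) - 1/2) η)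
    (hs' : ∀ η ∈ Set.Icc (0:ℝ) ξbar,
      HasDerivAt s (K * ((∫ ζ in (0:ℝ)..(Z + Δ η), n0 ζ) - ∫ ζ in (0:ℝ)..Z, n0 ζ)) η)
    (hΔ0 : Δ 0 = 0) (hs0 : s 0 = 1)
    (ξ : ℝ) (hξ : ξ ∈ Set.Icc (0:ℝ) ξbar) :
    (s ξ - 1)^2 / (2 * s ξ) + K * ∫ ζ in (0:ℝ)..(Δ ξ), (Δ ξ - ζ) * n0 (Z + ζ)
      = ∫ η in (0:ℝ)..ξ, v η * deriv s η / (2 * (s η)^2) := by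
  obtain ⟨hξ0, hξb⟩ := hξ
  set f : ℝ → ℝ := fun ζ => n0 (Z + ζ) with hf_def
  have hf_cont : Continuous f := hn0_cont.comp (continuous_const.add continuous_id)
  have hg_cont : Continuous (fun ζ => ζ * f ζ) := continuous_id.mul hf_cont
  set A : ℝ → ℝ := fun d => ∫ ζ in (0:ℝ)..d, f ζ with hA_def
  set B : ℝ → ℝ := fun d => ∫ ζ in (0:ℝ)..d, ζ * f ζ with hB_def
  have hA_deriv : ∀ d, HasDerivAt A (f d) d := fun d =>
    intervalIntegral.integral_hasDerivAt_right (hf_cont.intervalIntegrable 0 d)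
      (hf_cont.stronglyMeasurableAtFilter _ _) hf_cont.continuousAt
  have hB_deriv : ∀ d, HasDerivAt B (d * f d) d := fun d =>
    intervalIntegral.integral_hasDerivAt_right (hg_cont.intervalIntegrable 0 d)
      (hg_cont.stronglyMeasurableAtFilter _ _) hg_cont.continuousAt
  have hA_cont : Continuous A :=
    intervalIntegral.continuous_primitive (fun a b => hf_cont.intervalIntegrable a b) 0
  have hA_eq : ∀ d, A d = (∫ ζ in (0:ℝ)..(Z+d), n0 ζ) - ∫ ζ in (0:ℝ)..Z, n0 ζ := by
    intro d
    rw [hA_def]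
    simp only [hf_def]
    rw [intervalIntegral.integral_comp_add_left n0 Z, add_zero,
      intervalIntegral.integral_interval_sub_left (hn0_cont.intervalIntegrable 0 (Z+d))
        (hn0_cont.intervalIntegrable 0 Z)]
  -- the energy function
  set H : ℝ → ℝ := fun x => (s x - 1)^2 / (2 * s x) + K * (Δ x * A (Δ x) - B (Δ x)) with hH_def
  -- continuity of s and Δ on the interval
  have hIcc : Set.Icc (0:ℝ) ξ ⊆ Set.Icc (0:ℝ) ξbar := Set.Icc_subset_Icc le_rfl hξb
  have hs_contOn : ContinuousOn s (Set.Icc 0 ξbar) := fun η hη =>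
    ((hs' η hη).continuousAt).continuousWithinAt
  have hΔ_contOn : ContinuousOn Δ (Set.Icc 0 ξbar) := fun η hη =>
    ((hΔ' η hη).continuousAt).continuousWithinAt
  -- the derivative of H on the interval
  have hH_deriv : ∀ η ∈ Set.Icc (0:ℝ) ξbar,
      HasDerivAt H (v η * (K * A (Δ η)) / (2 * (s η)^2)) η := by
    intro η hη
    have hsne : s η ≠ 0 := (hs_pos η hη).ne'
    have hsη : HasDerivAt s (K * A (Δ η)) η := by
      rw [hA_eq]; exact hs' η hη
    have hΔη := hΔ' η hη
    have hAcomp : HasDerivAt (fun x => A (Δ x))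
        (f (Δ η) * ((1 + v η) / (2 * (s η)^2) - 1/2)) η :=
      (hA_deriv (Δ η)).comp η hΔη
    have hBcomp : HasDerivAt (fun x => B (Δ x))
        (Δ η * f (Δ η) * ((1 + v η) / (2 * (s η)^2) - 1/2)) η :=
      (hB_deriv (Δ η)).comp η hΔη
    have h1 : HasDerivAt (fun x => (s x - 1)^2 / (2 * s x))
        (((2:ℕ) * (s η - 1)^1 * (K * A (Δ η)) * (2 * s η)
          - (s η - 1)^2 * (2 * (K * A (Δ η)))) / (2 * s η)^2) η := by
      exact HasDerivAt.div ((hsη.sub_const 1).pow 2) (hsη.const_mul 2)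
        (by simpa using mul_ne_zero two_ne_zero hsne)
    have h2 : HasDerivAt (fun x => Δ x * A (Δ x))
        (((1 + v η) / (2 * (s η)^2) - 1/2) * A (Δ η)
          + Δ η * (f (Δ η) * ((1 + v η) / (2 * (s η)^2) - 1/2))) η :=
      hΔη.mul hAcomp
    have h := h1.add (((h2.sub hBcomp)).const_mul K)
    refine h.congr_deriv ?_
    have hs2 : (s η)^2 ≠ 0 := pow_ne_zero 2 hsne
    field_simp
    ring
  -- value at 0
  have hH0 : H 0 = 0 := by
    simp [hH_def, hs0, hΔ0, hA_def, hB_def]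
  -- FTC on [0, ξ]
  have huIcc : Set.uIcc (0:ℝ) ξ = Set.Icc 0 ξ := Set.uIcc_of_le hξ0
  have hint : IntervalIntegrable (fun η => v η * (K * A (Δ η)) / (2 * (s η)^2))
      volume 0 ξ := by
    apply ContinuousOn.intervalIntegrable
    rw [huIcc]
    apply ContinuousOn.div
    · exact (hv_cont.continuousOn).mul
        ((continuous_const.mul hA_cont).comp_continuousOn (hΔ_contOn.mono hIcc))
    · exact continuousOn_const.mul ((hs_contOn.mono hIcc).pow 2)
    · intro η hη
      exact mul_ne_zero two_ne_zero (pow_ne_zero 2 (hs_pos η (hIcc hη)).ne')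
  have hftc : (∫ η in (0:ℝ)..ξ, v η * (K * A (Δ η)) / (2 * (s η)^2)) = H ξ - H 0 :=
    intervalIntegral.integral_eq_sub_of_hasDerivAt
      (fun η hη => hH_deriv η (hIcc (huIcc ▸ hη))) hint
  -- rewrite the U-integral
  have hU : (∫ ζ in (0:ℝ)..(Δ ξ), (Δ ξ - ζ) * n0 (Z + ζ))
      = Δ ξ * A (Δ ξ) - B (Δ ξ) := by
    have : ∀ ζ, (Δ ξ - ζ) * n0 (Z + ζ) = Δ ξ * f ζ - ζ * f ζ := by
      intro ζ; simp only [hf_def]; ring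
    rw [intervalIntegral.integral_congr (fun ζ _ => this ζ),
      intervalIntegral.integral_sub (f := fun ζ => Δ ξ * f ζ) ((continuous_const.mul hf_cont).intervalIntegrable 0 (Δ ξ))
        (hg_cont.intervalIntegrable 0 (Δ ξ)),
      intervalIntegral.integral_const_mul]
  -- rewrite the right-hand integrand
  have hRHS : (∫ η in (0:ℝ)..ξ, v η * deriv s η / (2 * (s η)^2))
      = ∫ η in (0:ℝ)..ξ, v η * (K * A (Δ η)) / (2 * (s η)^2) := by
    apply intervalIntegral.integral_congr
    intro η hη
    have hη' : η ∈ Set.Icc (0:ℝ) ξbar := hIcc (huIcc ▸ hη)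
    have : deriv s η = K * ((∫ ζ in (0:ℝ)..(Z + Δ η), n0 ζ) - ∫ ζ in (0:ℝ)..Z, n0 ζ) :=
      (hs' η hη').deriv
    show v η * deriv s η / (2 * (s η)^2) = v η * (K * A (Δ η)) / (2 * (s η)^2)
    rw [this, hA_eq]
  rw [hRHS, hftc, hH0, sub_zero, hH_def]
  simp only
  rw [hU]
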